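/- Let N > 100 and let (x_1, …, x_N) be the unique strictly decreasing zero-mean solution of the MIW recursion. Then 0 ≤ x_m ≤ 1/m. -/

import Mathlib

noncomputable section

/-- Partial sums `S_n = x_1 + ⋯ + x_n`. -/
def Ssum (x : ℕ → ℝ) (n : ℕ) : ℝ := ∑ i ∈ Finset.Icc 1 n, x i

/-- `x` is a solution of the MIW recursion
`x_{n+1} = x_n - 1/(x_1 + ⋯ + x_n)` for `1 ≤ n ≤ N - 1`. -/
def IsMIW (N : ℕ) (x : ℕ → ℝ) : Prop :=
  ∀ n, 1 ≤ n → n ≤ N - 1 → Ssum x n ≠ 0 ∧ x (n + 1) = x n - 1 / Ssum x n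

/-- `m = (N+1)/2` if `N` is odd and `m = N/2` if `N` is even; in natural number
division both equal `(N+1)/2`. -/
def mIdx (N : ℕ) : ℕ := (N + 1) / 2

lemma Ssum_zero' (x : ℕ → ℝ) : Ssum x 0 = 0 := by simp [Ssum]

lemma Ssum_one' (x : ℕ → ℝ) : Ssum x 1 = x 1 := by simp [Ssum]

lemma Ssum_succ' (x : ℕ → ℝ) (n : ℕ) : Ssum x (n + 1) = Ssum x n + x (n + 1) := by
  rw [Ssum, Ssum, Finset.sum_Icc_succ_top (by omega)]

/-- Splitting a partial sum. -/
lemma Ssum_split (x : ℕ → ℝ) {a b : ℕ} (h : a ≤ b) :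
    Ssum x a + ∑ i ∈ Finset.Ioc a b, x i = Ssum x b := by
  rw [Ssum, Ssum]
  rw [show Finset.Icc 1 a = Finset.Ioc 0 a from rfl,
      show Finset.Icc 1 b = Finset.Ioc 0 b from rfl]
  exact Finset.sum_Ioc_consecutive _ (Nat.zero_le a) h

/-- Monotonicity from the strict decrease hypothesis. -/
lemma x_mono (N : ℕ) (x : ℕ → ℝ) (hdec : ∀ n, 1 ≤ n → n < N → x (n + 1) < x n) :
    ∀ i j, 1 ≤ i → i ≤ j → j ≤ N → x j ≤ x i := by
  intro i j hi hij hjN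
  induction j with
  | zero => omega
  | succ k ih =>
    rcases Nat.lt_or_ge i (k + 1) with h | h
    · have hk : x (k + 1) < x k := hdec k (by omega) (by omega)
      exact le_trans (le_of_lt hk) (ih (by omega) (by omega))
    · have : i = k + 1 := by omega
      rw [this]

/-- Positivity of the partial sums of a strictly decreasing zero-mean sequence. -/
lemma Spos (N : ℕ) (x : ℕ → ℝ) (hdec : ∀ n, 1 ≤ n → n < N → x (n + 1) < x n)
    (hmean : Ssum x N = 0) :
    ∀ n, 1 ≤ n → n < N → 0 < Ssum x n := by
  intro n hn hnN
  have hsplit := Ssum_split x (le_of_lt hnN)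
  rw [hmean] at hsplit
  have h1 : (n : ℝ) * x n ≤ Ssum x n := by
    have := Finset.card_nsmul_le_sum (Finset.Icc 1 n) x (x n)
      (fun i hi => by
        simp only [Finset.mem_Icc] at hi
        exact x_mono N x hdec i n hi.1 hi.2 (by omega))
    simpa [Ssum, Nat.card_Icc, nsmul_eq_mul] using this
  have h2 : ∑ i ∈ Finset.Ioc n N, x i ≤ ((N - n : ℕ) : ℝ) * x (n + 1) := by
    have := Finset.sum_le_card_nsmul (Finset.Ioc n N) x (x (n + 1))
      (fun i hi => by
        simp only [Finset.mem_Ioc] at hi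
        exact x_mono N x hdec (n + 1) i (by omega) hi.1 hi.2)
    simpa [Nat.card_Ioc, nsmul_eq_mul] using this
  have h3 : x (n + 1) < x n := hdec n hn hnN
  have ha : (1 : ℝ) ≤ (n : ℝ) := by exact_mod_cast hn
  have hb : (1 : ℝ) ≤ ((N - n : ℕ) : ℝ) := by
    have : 1 ≤ N - n := by omega
    exact_mod_cast this
  nlinarith [mul_le_mul_of_nonneg_left h1 (by linarith : (0:ℝ) ≤ ((N - n : ℕ) : ℝ)),
    mul_le_mul_of_nonneg_left h2 (by linarith : (0:ℝ) ≤ (n : ℝ)),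
    mul_lt_mul_of_pos_left h3 (by positivity : (0:ℝ) < (n : ℝ) * ((N - n : ℕ) : ℝ))]

/-- Strict comparison of MIW solutions with positive partial sums. -/
lemma MIW_lt (N : ℕ) (x y : ℕ → ℝ) (hx : IsMIW N x) (hy : IsMIW N y)
    (hxpos : ∀ n, 1 ≤ n → n ≤ N - 1 → 0 < Ssum x n)
    (hypos : ∀ n, 1 ≤ n → n ≤ N - 1 → 0 < Ssum y n)
    (h1 : x 1 < y 1) :
    ∀ n, 1 ≤ n → n ≤ N → x n < y n ∧ Ssum x n < Ssum y n := by
  intro n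
  induction n with
  | zero => omega
  | succ k ih =>
    intro _ hkN
    rcases Nat.eq_zero_or_pos k with hk | hk
    · subst hk
      exact ⟨h1, by rw [Ssum_one', Ssum_one']; exact h1⟩
    · have hk1 : k ≤ N - 1 := by omega
      obtain ⟨ihx, ihS⟩ := ih hk (by omega)
      obtain ⟨hxne, hxrec⟩ := hx k hk hk1
      obtain ⟨hyne, hyrec⟩ := hy k hk hk1
      have hSx := hxpos k hk hk1
      have hinv : 1 / Ssum y k < 1 / Ssum x k := one_div_lt_one_div_of_lt hSx ihS
      have hxy : x (k + 1) < y (k + 1) := by rw [hxrec, hyrec]; linarith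
      exact ⟨hxy, by rw [Ssum_succ', Ssum_succ']; linarith⟩

/-- Uniqueness of the zero-mean MIW solution with positive partial sums. -/
lemma MIW_eq (N : ℕ) (x y : ℕ → ℝ) (hNpos : 1 ≤ N) (hx : IsMIW N x) (hy : IsMIW N y)
    (hxpos : ∀ n, 1 ≤ n → n ≤ N - 1 → 0 < Ssum x n)
    (hypos : ∀ n, 1 ≤ n → n ≤ N - 1 → 0 < Ssum y n)
    (hxN : Ssum x N = 0) (hyN : Ssum y N = 0) :
    ∀ n, 1 ≤ n → n ≤ N → x n = y n := by
  have h1 : x 1 = y 1 := by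
    rcases lt_trichotomy (x 1) (y 1) with h' | h' | h'
    · have := (MIW_lt N x y hx hy hxpos hypos h' N hNpos le_rfl).2
      rw [hxN, hyN] at this; exact absurd this (lt_irrefl 0)
    · exact h'
    · have := (MIW_lt N y x hy hx hypos hxpos h' N hNpos le_rfl).2
      rw [hxN, hyN] at this; exact absurd this (lt_irrefl 0)
  have key : ∀ n, 1 ≤ n → n ≤ N → x n = y n ∧ Ssum x n = Ssum y n := by
    intro n
    induction n with
    | zero => omega
    | succ k ih =>
      intro _ hkN
      rcases Nat.eq_zero_or_pos k with hk | hk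
      · subst hk
        exact ⟨h1, by rw [Ssum_one', Ssum_one']; exact h1⟩
      · have hk1 : k ≤ N - 1 := by omega
        obtain ⟨ihx, ihS⟩ := ih hk (by omega)
        obtain ⟨hxne, hxrec⟩ := hx k hk hk1
        obtain ⟨hyne, hyrec⟩ := hy k hk hk1
        have hxy : x (k + 1) = y (k + 1) := by rw [hxrec, hyrec, ihx, ihS]
        exact ⟨hxy, by rw [Ssum_succ', Ssum_succ', ihS, hxy]⟩
  exact fun n hn hnN => (key n hn hnN).1

/-- The partial sums of the reflected sequence. -/
lemma Ssum_rev (N : ℕ) (x : ℕ → ℝ) (hmean : Ssum x N = 0) :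
    ∀ n, n ≤ N → Ssum (fun k => -x (N + 1 - k)) n = Ssum x (N - n) := by
  intro n hnN
  have hre : ∑ i ∈ Finset.Icc 1 n, x (N + 1 - i) = ∑ j ∈ Finset.Icc (N + 1 - n) N, x j := by
    apply Finset.sum_nbij' (fun a => N + 1 - a) (fun b => N + 1 - b)
    · intro a ha; simp only [Finset.mem_Icc] at *; omega
    · intro a ha; simp only [Finset.mem_Icc] at *; omega
    · intro a ha; simp only [Finset.mem_Icc] at ha; omega
    · intro a ha; simp only [Finset.mem_Icc] at ha; omega
    · intro a ha; rfl
  have hsplit := Ssum_split x (Nat.sub_le N n)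
  rw [hmean] at hsplit
  have hIcc : Finset.Icc (N + 1 - n) N = Finset.Ioc (N - n) N := by
    rw [← Finset.Icc_add_one_left_eq_Ioc]
    congr 1
    omega
  calc Ssum (fun k => -x (N + 1 - k)) n
      = -∑ i ∈ Finset.Icc 1 n, x (N + 1 - i) := by rw [Ssum, Finset.sum_neg_distrib]
    _ = -∑ j ∈ Finset.Ioc (N - n) N, x j := by rw [hre, hIcc]
    _ = Ssum x (N - n) := by linarith

/-- Symmetry of the strictly decreasing zero-mean MIW solution. -/
lemma MIW_symm (N : ℕ) (x : ℕ → ℝ) (hNpos : 2 ≤ N) (hx : IsMIW N x)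
    (hdec : ∀ n, 1 ≤ n → n < N → x (n + 1) < x n)
    (hmean : Ssum x N = 0) :
    ∀ n, 1 ≤ n → n ≤ N → x n = -x (N + 1 - n) := by
  set y : ℕ → ℝ := fun k => -x (N + 1 - k) with hy_def
  have hxpos : ∀ n, 1 ≤ n → n ≤ N - 1 → 0 < Ssum x n := fun n hn hnN =>
    Spos N x hdec hmean n hn (by omega)
  have hSrev := Ssum_rev N x hmean
  have hypos : ∀ n, 1 ≤ n → n ≤ N - 1 → 0 < Ssum y n := by
    intro n hn hnN
    rw [hSrev n (by omega)]
    exact hxpos (N - n) (by omega) (by omega)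
  have hy : IsMIW N y := by
    intro n hn hnN
    have hS : Ssum y n = Ssum x (N - n) := hSrev n (by omega)
    refine ⟨by rw [hS]; exact ne_of_gt (hxpos (N - n) (by omega) (by omega)), ?_⟩
    obtain ⟨hne, hrec⟩ := hx (N - n) (by omega) (by omega)
    have e1 : N + 1 - (n + 1) = N - n := by omega
    have e2 : N - n + 1 = N + 1 - n := by omega
    rw [e2] at hrec
    rw [hS]; simp only [hy_def, e1, hrec]
    ring
  have hyN : Ssum y N = 0 := by rw [hSrev N le_rfl, Nat.sub_self, Ssum_zero']
  exact MIW_eq N x y (by omega) hx hy hxpos hypos hmean hyN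

/-- For the unique strictly decreasing zero-mean solution of the MIW recursion with
`N > 100`, one has `0 ≤ x_m ≤ 1/m`. -/
theorem xm_bound (N : ℕ) (hN : 100 < N) (x : ℕ → ℝ)
    (hMIW : IsMIW N x) (hdec : ∀ n, 1 ≤ n → n < N → x (n + 1) < x n)
    (hmean : ∑ i ∈ Finset.Icc 1 N, x i = 0) :
    0 ≤ x (mIdx N) ∧ x (mIdx N) ≤ 1 / (mIdx N : ℝ) := by
  have hmean' : Ssum x N = 0 := hmean
  set m := mIdx N with hm_def
  have hm50 : 50 ≤ m := by unfold m; unfold mIdx; omega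
  have hmN : m < N := by unfold m; unfold mIdx; omega
  have hsymm := MIW_symm N x (by omega) hMIW hdec hmean'
  rcases Nat.even_or_odd N with hpar | hpar
  · -- N even : m = N / 2, x (m+1) = -x m
    obtain ⟨t, ht⟩ := hpar
    have hNm : N = 2 * m := by unfold m; unfold mIdx; omega
    have hs : x m = -x (m + 1) := by
      have := hsymm m (by omega) (by omega)
      rw [show N + 1 - m = m + 1 by omega] at this
      exact this
    have hxm_pos : 0 < x m := by
      have hd := hdec m (by omega) hmN
      linarith [hs, hd]
    refine ⟨le_of_lt hxm_pos, ?_⟩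
    -- recursion at m
    obtain ⟨hSne, hrec⟩ := hMIW m (by omega) (by omega)
    have hSm_pos : 0 < Ssum x m := Spos N x hdec hmean' m (by omega) hmN
    have hxm1 : x (m + 1) = -x m := by linarith [hs]
    have hinv : 1 / Ssum x m = 2 * x m := by
      rw [hxm1] at hrec; linarith
    have h2xS : 2 * x m * Ssum x m = 1 := by
      field_simp at hinv
      linarith
    -- x i > 0 for 1 ≤ i ≤ m
    have hxpos_le : ∀ i, 1 ≤ i → i ≤ m → 0 < x i := fun i hi him =>
      lt_of_lt_of_le hxm_pos (x_mono N x hdec i m hi him (by omega))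
    -- S_j ≤ S_m for j ≤ m
    have hSle : ∀ j, j ≤ m → Ssum x j ≤ Ssum x m := by
      intro j hj
      have := Ssum_split x hj
      have hnn : 0 ≤ ∑ i ∈ Finset.Ioc j m, x i := by
        apply Finset.sum_nonneg
        intro i hi
        simp only [Finset.mem_Ioc] at hi
        exact le_of_lt (hxpos_le i (by omega) hi.2)
      linarith
    -- x (m - k) ≥ x m + k / S_m
    have hlow : ∀ k, k ≤ m - 1 → x m + (k : ℝ) / Ssum x m ≤ x (m - k) := by
      intro k
      induction k with
      | zero => intro _; simp
      | succ j ih =>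
        intro hj
        have hjle := ih (by omega)
        have hj1 : 1 ≤ m - j - 1 := by omega
        obtain ⟨hne, hrec'⟩ := hMIW (m - j - 1) hj1 (by omega)
        have hSj_pos : 0 < Ssum x (m - j - 1) := Spos N x hdec hmean' _ hj1 (by omega)
        have hSj_le : Ssum x (m - j - 1) ≤ Ssum x m := hSle _ (by omega)
        have hinvj : 1 / Ssum x m ≤ 1 / Ssum x (m - j - 1) :=
          one_div_le_one_div_of_le hSj_pos hSj_le
        have e : m - j - 1 + 1 = m - j := by omega
        rw [e] at hrec'
        have : x (m - j - 1) = x (m - j) + 1 / Ssum x (m - j - 1) := by linarith [hrec']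
        rw [show m - (j + 1) = m - j - 1 by omega, this]
        push_cast
        have : (j : ℝ) / Ssum x m + 1 / Ssum x m = ((j : ℝ) + 1) / Ssum x m := by
          field_simp
        linarith
    -- sum the lower bounds
    have hsum_low : (m : ℝ) * x m + ((m : ℝ) * (m - 1) / 2) / Ssum x m ≤ Ssum x m := by
      have hterm : ∀ i ∈ Finset.Icc 1 m, x m + ((m : ℝ) - i) / Ssum x m ≤ x i := by
        intro i hi
        simp only [Finset.mem_Icc] at hi
        have h := hlow (m - i) (by omega)
        rw [show m - (m - i) = i by omega] at h
        have : ((m - i : ℕ) : ℝ) = (m : ℝ) - i := by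
          have : (i : ℝ) ≤ (m : ℝ) := by exact_mod_cast hi.2
          push_cast [Nat.cast_sub hi.2]
          ring
        rwa [this] at h
      have hsum := Finset.sum_le_sum hterm
      have hgauss : ∑ i ∈ Finset.Icc 1 m, (i : ℝ) = (m : ℝ) * (m + 1) / 2 := by
        clear * -
        induction m with
        | zero => simp
        | succ j ih =>
          rw [Finset.sum_Icc_succ_top (by omega)]
          rw [ih]
          push_cast
          ring
      have hexp : ∑ i ∈ Finset.Icc 1 m, (x m + ((m : ℝ) - i) / Ssum x m)
          = (m : ℝ) * x m + ((m : ℝ) * (m - 1) / 2) / Ssum x m := by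
        rw [Finset.sum_add_distrib, ← Finset.sum_div, Finset.sum_sub_distrib, hgauss,
          Finset.sum_const, Finset.sum_const, Nat.card_Icc, Nat.add_sub_cancel]
        simp only [nsmul_eq_mul]
        ring
      rw [hexp] at hsum
      exact le_trans hsum (le_of_eq rfl)
    -- conclude
    set S := Ssum x m
    have hmR : (50 : ℝ) ≤ (m : ℝ) := by exact_mod_cast hm50
    have haS : x m * S = 1 / 2 := by linarith
    have hSq : (m : ℝ) ^ 2 / 2 ≤ S ^ 2 := by
      have h := mul_le_mul_of_nonneg_right hsum_low hSm_pos.le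
      have h2 : ((m : ℝ) * x m + (m : ℝ) * (m - 1) / 2 / S) * S
          = (m : ℝ) * (x m * S) + (m : ℝ) * (m - 1) / 2 := by
        field_simp
      rw [h2, haS] at h
      nlinarith [h]
    rw [le_div_iff₀ (by linarith : (0 : ℝ) < (m : ℝ))]
    nlinarith [h2xS, hSm_pos, hxm_pos, hSq, sq_nonneg (2 * S - (m : ℝ))]
  · -- N odd : m is the middle index, x m = 0
    have hNm : N + 1 - m = m := by
      obtain ⟨t, ht⟩ := hpar
      unfold m; unfold mIdx; omega
    have := hsymm m (by omega) (by omega)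
    rw [hNm] at this
    have hxm : x m = 0 := by linarith
    rw [hxm]
    constructor
    · exact le_refl 0
    · positivity
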